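/- Let a = t_0 < t_1 < … < t_n = b be real numbers, let F : ℝ → ℝ^{p×2} be a matrix-valued function, let Σ be a positive definite real 2×2 matrix, and set ΔF_i := F(t_i) − F(t_{i−1}) and Δ_i := t_i − t_{i−1} for i = 1, …, n. Assume that the p×p matrix B := ∑_{i=1}^n ΔF_i Σ⁻¹ ΔF_iᵀ / Δ_i is invertible and let M₀ be a p×p real matrix. Then: (a) for every family Φ_1, …, Φ_n of real p×2 matrices satisfying ∑_{i=1}^n Φ_i Σ⁻¹ ΔF_iᵀ = M₀, the matrix ∑_{i=1}^n Δ_i Φ_i Σ⁻¹ Φ_iᵀ − M₀ B⁻¹ M₀ᵀ is positive semidefinite; and (b) the matrices Φ_i* := M₀ B⁻¹ ΔF_i / Δ_i satisfy ∑_{i=1}^n Φ_i* Σ⁻¹ ΔF_iᵀ = M₀ and ∑_{i=1}^n Δ_i Φ_i* Σ⁻¹ Φ_i*ᵀ = M₀ B⁻¹ M₀ᵀ. -/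

import Mathlib

open Matrix BigOperators

private lemma psd_smul {m : ℕ} {c : ℝ} (hc : 0 ≤ c) {A : Matrix (Fin m) (Fin m) ℝ}
    (hA : A.PosSemidef) : (c • A).PosSemidef := by
  refine ⟨?_, fun x => ?_⟩
  · unfold Matrix.IsHermitian
    rw [conjTranspose_smul, hA.1.eq]
    simp
  · exact (hA.smul hc).2 x

private lemma psd_sum {m N : ℕ} (f : Fin N → Matrix (Fin m) (Fin m) ℝ)
    (hf : ∀ i, (f i).PosSemidef) : (∑ i, f i).PosSemidef := by
  classical
  exact Finset.sum_induction f _ (fun A B hA hB => hA.add hB) Matrix.PosSemidef.zero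
    (fun i _ => hf i)

theorem optimal_weights_discrete_estimator
    (p n : ℕ) (hn : 1 ≤ n) (a b : ℝ)
    (t : Fin (n + 1) → ℝ) (ht : StrictMono t) (hta : t 0 = a) (htb : t (Fin.last n) = b)
    (F : ℝ → Matrix (Fin p) (Fin 2) ℝ)
    (Sig : Matrix (Fin 2) (Fin 2) ℝ) (hSig : Sig.PosDef)
    (ΔF : Fin n → Matrix (Fin p) (Fin 2) ℝ)
    (hΔF : ∀ i : Fin n, ΔF i = F (t i.succ) - F (t i.castSucc))
    (Δ : Fin n → ℝ) (hΔ : ∀ i : Fin n, Δ i = t i.succ - t i.castSucc)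
    (Bm : Matrix (Fin p) (Fin p) ℝ)
    (hBm : Bm = ∑ i, (Δ i)⁻¹ • (ΔF i * Sig⁻¹ * (ΔF i)ᵀ))
    (hB : IsUnit Bm)
    (M0 : Matrix (Fin p) (Fin p) ℝ) :
    (∀ Φ : Fin n → Matrix (Fin p) (Fin 2) ℝ,
        (∑ i, Φ i * Sig⁻¹ * (ΔF i)ᵀ) = M0 →
        ((∑ i, Δ i • (Φ i * Sig⁻¹ * (Φ i)ᵀ)) - M0 * Bm⁻¹ * M0ᵀ).PosSemidef) ∧
    ((∑ i, ((Δ i)⁻¹ • (M0 * Bm⁻¹ * ΔF i)) * Sig⁻¹ * (ΔF i)ᵀ) = M0 ∧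
      (∑ i, Δ i • (((Δ i)⁻¹ • (M0 * Bm⁻¹ * ΔF i)) * Sig⁻¹ * ((Δ i)⁻¹ • (M0 * Bm⁻¹ * ΔF i))ᵀ))
        = M0 * Bm⁻¹ * M0ᵀ) := by
  classical
  have hΔpos : ∀ i : Fin n, 0 < Δ i := fun i => by
    rw [hΔ i]; exact sub_pos.mpr (ht (Fin.castSucc_lt_succ (i := i)))
  have hΔne : ∀ i : Fin n, Δ i ≠ 0 := fun i => (hΔpos i).ne'
  have hC : (Sig⁻¹).PosDef := hSig.inv
  have hCsymm : (Sig⁻¹)ᵀ = Sig⁻¹ := by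
    have := hC.isHermitian.eq
    rwa [conjTranspose_eq_transpose_of_trivial] at this
  have hBsymm : Bmᵀ = Bm := by
    rw [hBm, transpose_sum]
    refine Finset.sum_congr rfl fun i _ => ?_
    rw [transpose_smul, Matrix.transpose_mul, Matrix.transpose_mul, transpose_transpose,
      hCsymm, Matrix.mul_assoc]
  have hBinvsymm : (Bm⁻¹)ᵀ = Bm⁻¹ := by rw [transpose_nonsing_inv, hBsymm]
  have hdet : IsUnit Bm.det := (isUnit_iff_isUnit_det Bm).mp hB
  have hBi : Bm⁻¹ * Bm = 1 := nonsing_inv_mul Bm hdet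
  set K := M0 * Bm⁻¹ with hK
  set Φs : Fin n → Matrix (Fin p) (Fin 2) ℝ := fun i => (Δ i)⁻¹ • (K * ΔF i) with hΦs
  -- (b1) unbiasedness of Φ*
  have b1 : (∑ i, Φs i * Sig⁻¹ * (ΔF i)ᵀ) = M0 := by
    have : ∀ i : Fin n, Φs i * Sig⁻¹ * (ΔF i)ᵀ
        = K * ((Δ i)⁻¹ • (ΔF i * Sig⁻¹ * (ΔF i)ᵀ)) := by
      intro i
      rw [hΦs]
      simp only [Matrix.smul_mul, Matrix.mul_smul, Matrix.mul_assoc]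
    rw [Finset.sum_congr rfl (fun i _ => this i), ← Finset.mul_sum, ← hBm, hK,
      mul_assoc, hBi, mul_one]
  -- cross lemma
  have hcross : ∀ Φ : Fin n → Matrix (Fin p) (Fin 2) ℝ,
      (∑ i, Φ i * Sig⁻¹ * (ΔF i)ᵀ) = M0 →
      (∑ i, Δ i • (Φs i * Sig⁻¹ * (Φ i)ᵀ)) = M0 * Bm⁻¹ * M0ᵀ := by
    intro Φ hΦ
    have hterm : ∀ i : Fin n, Δ i • (Φs i * Sig⁻¹ * (Φ i)ᵀ)
        = K * (ΔF i * Sig⁻¹ * (Φ i)ᵀ) := by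
      intro i
      rw [hΦs]
      simp only [Matrix.smul_mul, smul_smul, mul_inv_cancel₀ (hΔne i), one_smul,
        Matrix.mul_assoc]
    rw [Finset.sum_congr rfl (fun i _ => hterm i), ← Finset.mul_sum]
    have hsumT : (∑ i, ΔF i * Sig⁻¹ * (Φ i)ᵀ) = M0ᵀ := by
      rw [← hΦ, transpose_sum]
      refine Finset.sum_congr rfl fun i _ => ?_
      rw [Matrix.transpose_mul, Matrix.transpose_mul, transpose_transpose, hCsymm,
        Matrix.mul_assoc]
    rw [hsumT, hK, mul_assoc]
  -- (b2)
  have b2 : (∑ i, Δ i • (Φs i * Sig⁻¹ * (Φs i)ᵀ)) = M0 * Bm⁻¹ * M0ᵀ := hcross Φs b1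
  refine ⟨?_, b1, b2⟩
  intro Φ hΦ
  set Ψ : Fin n → Matrix (Fin p) (Fin 2) ℝ := fun i => Φ i - Φs i with hΨ
  have hS : (∑ i, Δ i • (Ψ i * Sig⁻¹ * (Ψ i)ᵀ)).PosSemidef := by
    apply psd_sum
    intro i
    apply psd_smul (hΔpos i).le
    have := hC.posSemidef.mul_mul_conjTranspose_same (Ψ i)
    rwa [conjTranspose_eq_transpose_of_trivial] at this
  have expand : ∀ i : Fin n, Δ i • (Ψ i * Sig⁻¹ * (Ψ i)ᵀ)
      = Δ i • (Φ i * Sig⁻¹ * (Φ i)ᵀ) - Δ i • (Φ i * Sig⁻¹ * (Φs i)ᵀ)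
        - Δ i • (Φs i * Sig⁻¹ * (Φ i)ᵀ) + Δ i • (Φs i * Sig⁻¹ * (Φs i)ᵀ) := by
    intro i
    rw [hΨ]
    simp only [transpose_sub, Matrix.sub_mul, Matrix.mul_sub, smul_sub]
    abel
  have hsplit : (∑ i, Δ i • (Ψ i * Sig⁻¹ * (Ψ i)ᵀ))
      = (∑ i, Δ i • (Φ i * Sig⁻¹ * (Φ i)ᵀ)) - (∑ i, Δ i • (Φ i * Sig⁻¹ * (Φs i)ᵀ))
        - (∑ i, Δ i • (Φs i * Sig⁻¹ * (Φ i)ᵀ)) + (∑ i, Δ i • (Φs i * Sig⁻¹ * (Φs i)ᵀ)) := by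
    rw [Finset.sum_congr rfl (fun i _ => expand i)]
    rw [Finset.sum_add_distrib, Finset.sum_sub_distrib, Finset.sum_sub_distrib]
  have hX : (∑ i, Δ i • (Φ i * Sig⁻¹ * (Φs i)ᵀ))
      = (∑ i, Δ i • (Φs i * Sig⁻¹ * (Φ i)ᵀ))ᵀ := by
    rw [transpose_sum]
    refine Finset.sum_congr rfl fun i _ => ?_
    conv_rhs => rw [transpose_smul, Matrix.transpose_mul, Matrix.transpose_mul,
      transpose_transpose, hCsymm]
    rw [Matrix.mul_assoc]
  have hTsymm : (M0 * Bm⁻¹ * M0ᵀ)ᵀ = M0 * Bm⁻¹ * M0ᵀ := by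
    rw [Matrix.transpose_mul, Matrix.transpose_mul, transpose_transpose, hBinvsymm,
      Matrix.mul_assoc]
  have key : (∑ i, Δ i • (Ψ i * Sig⁻¹ * (Ψ i)ᵀ))
      = (∑ i, Δ i • (Φ i * Sig⁻¹ * (Φ i)ᵀ)) - M0 * Bm⁻¹ * M0ᵀ := by
    rw [hsplit, hX, hcross Φ hΦ, hTsymm, b2]
    abel
  rw [← key]
  exact hS
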